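/- Let (P^t) be the semigroup of a continuous-time Markov process on an ε-geodesic Polish metric space (E,d), for some ε > 0. Then the infimum of the coarse Ricci curvature κ(x,y) over all pairs of distinct points (x,y) ∈ E² equals the infimum of κ(x,y) over all pairs of distinct points with d(x,y) ≤ ε. -/

import Mathlib

open MeasureTheory ProbabilityTheory Filter Topology Set
open scoped ENNReal NNReal

/-- The L¹ Wasserstein distance between two measures on a metric space:
infimum over all couplings (measures on `E × E` with the prescribed marginals)
of the integral of the distance. -/
noncomputable def W1 {E : Type*} [MetricSpace E] [MeasurableSpace E] (μ ν : Measure E) : ℝ≥0∞ :=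
  ⨅ (ξ : Measure (E × E)) (_ : ξ.map Prod.fst = μ ∧ ξ.map Prod.snd = ν),
    ∫⁻ p, edist p.1 p.2 ∂ξ

/-- The quantity `(1 - W₁(P_x^t, P_y^t)/d(x,y)) / t`, as an extended real number. -/
noncomputable def curvRatio {E : Type*} [MetricSpace E] [MeasurableSpace E]
    (P : ℝ → Kernel E E) (x y : E) (t : ℝ) : EReal :=
  (1 - (W1 (P t x) (P t y) : EReal) / ((ENNReal.ofReal (dist x y)) : EReal)) / (t : EReal)

/-- The coarse Ricci curvature `κ(x,y)`: the liminf as `t → 0⁺` of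
`(1 - W₁(P_x^t, P_y^t)/d(x,y)) / t`. -/
noncomputable def kappa {E : Type*} [MetricSpace E] [MeasurableSpace E]
    (P : ℝ → Kernel E E) (x y : E) : EReal :=
  Filter.liminf (curvRatio P x y) (𝓝[>] 0)

/-- The upper coarse Ricci curvature `κ̄(x,y)`: the limsup as `t → 0⁺` of
`(1 - W₁(P_x^t, P_y^t)/d(x,y)) / t`. -/
noncomputable def kappaBar {E : Type*} [MetricSpace E] [MeasurableSpace E]
    (P : ℝ → Kernel E E) (x y : E) : EReal :=
  Filter.limsup (curvRatio P x y) (𝓝[>] 0)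

/-- `P` is a Markov semigroup of transition kernels: each `P t` is a Markov kernel,
`P 0` is the identity, and the Chapman-Kolmogorov semigroup property holds. -/
def IsMarkovSemigroup {E : Type*} [MeasurableSpace E] (P : ℝ → Kernel E E) : Prop :=
  (∀ t, IsMarkovKernel (P t)) ∧ (P 0 = Kernel.id) ∧
    ∀ s t : ℝ, 0 ≤ s → 0 ≤ t → P (s + t) = (P t).comp (P s)


/-- The metric space `E` is `ε`-geodesic: any two points are joined by a finite chain of
points with consecutive distances at most `ε` whose total length is the distance. -/
def IsEpsGeodesic (E : Type*) [MetricSpace E] (ε : ℝ) : Prop :=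
  ∀ x y : E, ∃ (n : ℕ) (c : ℕ → E), c 0 = x ∧ c n = y ∧
    (∀ i < n, dist (c i) (c (i + 1)) ≤ ε) ∧
    (∑ i ∈ Finset.range n, dist (c i) (c (i + 1))) = dist x y

section Aux

set_option linter.unusedSectionVars false

variable {E : Type*} [MetricSpace E] [PolishSpace E] [MeasurableSpace E] [BorelSpace E]

lemma W1_le_coupling {μ ν : Measure E} {ξ : Measure (E × E)}
    (h : ξ.map Prod.fst = μ ∧ ξ.map Prod.snd = ν) : W1 μ ν ≤ ∫⁻ p, edist p.1 p.2 ∂ξ :=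
  iInf₂_le ξ h

lemma W1_self (μ : Measure E) : W1 μ μ = 0 := by
  refine le_antisymm ?_ zero_le'
  have hdiag : Measurable fun x : E => (x, x) := measurable_id.prodMk measurable_id
  refine le_trans (W1_le_coupling (μ := μ) (ν := μ) (ξ := μ.map fun x => (x, x)) ?_) ?_
  · constructor
    · rw [Measure.map_map measurable_fst hdiag]
      exact Measure.map_id
    · rw [Measure.map_map measurable_snd hdiag]
      exact Measure.map_id
  · rw [lintegral_map measurable_edist hdiag]
    simp

set_option linter.unusedSectionVars false

lemma isProb_of_coupling {μ : Measure E} [IsProbabilityMeasure μ] {ξ : Measure (E × E)}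
    (h : ξ.map Prod.fst = μ) : IsProbabilityMeasure ξ := by
  constructor
  have := congrArg (fun m : Measure E => m Set.univ) h
  simpa [Measure.map_apply measurable_fst MeasurableSet.univ] using this

lemma W1_triangle (μ ν ρ : Measure E) [IsProbabilityMeasure μ] [IsProbabilityMeasure ν]
    [IsProbabilityMeasure ρ] : W1 μ ρ ≤ W1 μ ν + W1 ν ρ := by
  by_cases h1 : W1 μ ν = ⊤
  · simp [h1]
  by_cases h2 : W1 ν ρ = ⊤
  · simp [h2]
  refine ENNReal.le_of_forall_pos_le_add fun δ hδ _ => ?_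
  -- find near-optimal couplings
  have hlt1 : W1 μ ν < W1 μ ν + δ / 2 :=
    ENNReal.lt_add_right h1 (ENNReal.half_pos (by exact_mod_cast hδ.ne')).ne'
  have hlt2 : W1 ν ρ < W1 ν ρ + δ / 2 :=
    ENNReal.lt_add_right h2 (ENNReal.half_pos (by exact_mod_cast hδ.ne')).ne'
  rw [W1, iInf_lt_iff] at hlt1 hlt2
  obtain ⟨ξ1, hξ1⟩ := hlt1
  rw [iInf_lt_iff] at hξ1
  obtain ⟨hc1, hint1⟩ := hξ1
  obtain ⟨ξ2, hξ2⟩ := hlt2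
  rw [iInf_lt_iff] at hξ2
  obtain ⟨hc2, hint2⟩ := hξ2
  haveI : IsProbabilityMeasure ξ1 := isProb_of_coupling hc1.1
  haveI : IsProbabilityMeasure ξ2 := isProb_of_coupling hc2.1
  haveI : Nonempty E := Measure.nonempty_of_neZero ν
  -- glue
  have hfstξ2 : ξ2.fst = ν := hc2.1
  set κ : Kernel E E := ξ2.condKernel with hκ
  haveI hκM : IsMarkovKernel κ := by rw [hκ]; infer_instance
  set η : Kernel (E × E) E := κ.comap Prod.snd measurable_snd with hη
  haveI hηM : IsMarkovKernel η := by rw [hη]; infer_instance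
  set θ : Measure ((E × E) × E) := ξ1 ⊗ₘ η with hθ
  have hg : Measurable fun p : (E × E) × E => (p.1.2, p.2) :=
    (measurable_snd.comp measurable_fst).prodMk measurable_snd
  have hfstθ : θ.map Prod.fst = ξ1 := Measure.fst_compProd ξ1 η
  have hsndθ : θ.map (fun p => (p.1.2, p.2)) = ξ2 := by
    ext s hs
    rw [Measure.map_apply hg hs, Measure.compProd_apply (hg hs)]
    have : ∀ ab : E × E, η ab (Prod.mk ab ⁻¹' ((fun p : (E × E) × E => (p.1.2, p.2)) ⁻¹' s))
        = κ ab.2 (Prod.mk ab.2 ⁻¹' s) := by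
      intro ab; rfl
    simp_rw [this]
    rw [← lintegral_map (Kernel.measurable_kernel_prodMk_left hs) measurable_snd, hc1.2]
    conv_rhs => rw [← ξ2.disintegrate ξ2.condKernel]
    rw [Measure.compProd_apply hs, hfstξ2]
  set ξ : Measure (E × E) := θ.map (fun p => (p.1.1, p.2)) with hξ
  have hgood : Measurable fun p : (E × E) × E => (p.1.1, p.2) :=
    (measurable_fst.comp measurable_fst).prodMk measurable_snd
  have hcoup : ξ.map Prod.fst = μ ∧ ξ.map Prod.snd = ρ := by
    constructor
    · rw [hξ, Measure.map_map measurable_fst hgood]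
      have : (Prod.fst ∘ fun p : (E × E) × E => (p.1.1, p.2)) = Prod.fst ∘ Prod.fst := rfl
      rw [this, ← Measure.map_map measurable_fst measurable_fst, hfstθ, hc1.1]
    · rw [hξ, Measure.map_map measurable_snd hgood]
      have : (Prod.snd ∘ fun p : (E × E) × E => (p.1.1, p.2))
          = Prod.snd ∘ (fun p : (E × E) × E => (p.1.2, p.2)) := rfl
      rw [this, ← Measure.map_map measurable_snd hg, hsndθ, hc2.2]
  have hint : ∫⁻ p, edist p.1 p.2 ∂ξ
      ≤ (∫⁻ p, edist p.1 p.2 ∂ξ1) + ∫⁻ p, edist p.1 p.2 ∂ξ2 := by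
    rw [hξ, lintegral_map measurable_edist hgood]
    calc ∫⁻ p, edist p.1.1 p.2 ∂θ
        ≤ ∫⁻ p, edist p.1.1 p.1.2 + edist p.1.2 p.2 ∂θ :=
          lintegral_mono fun p => edist_triangle _ _ _
      _ = (∫⁻ p, edist p.1.1 p.1.2 ∂θ) + ∫⁻ p, edist p.1.2 p.2 ∂θ := by
          exact lintegral_add_left
            (by fun_prop : Measurable fun p : (E × E) × E => edist p.1.1 p.1.2) _
      _ = (∫⁻ p, edist p.1 p.2 ∂ξ1) + ∫⁻ p, edist p.1 p.2 ∂ξ2 := by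
          rw [← hfstθ, ← hsndθ, lintegral_map measurable_edist measurable_fst,
            lintegral_map measurable_edist hg]
  calc W1 μ ρ ≤ ∫⁻ p, edist p.1 p.2 ∂ξ := W1_le_coupling hcoup
    _ ≤ (∫⁻ p, edist p.1 p.2 ∂ξ1) + ∫⁻ p, edist p.1 p.2 ∂ξ2 := hint
    _ ≤ (W1 μ ν + δ / 2) + (W1 ν ρ + δ / 2) := add_le_add hint1.le hint2.le
    _ = W1 μ ν + W1 ν ρ + ((δ : ℝ≥0∞) / 2 + (δ : ℝ≥0∞) / 2) := by ring
    _ = W1 μ ν + W1 ν ρ + δ := by rw [ENNReal.add_halves]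

lemma W1_chain (μ : ℕ → Measure E) [∀ i, IsProbabilityMeasure (μ i)] (n : ℕ) :
    W1 (μ 0) (μ n) ≤ ∑ i ∈ Finset.range n, W1 (μ i) (μ (i + 1)) := by
  induction n with
  | zero => simp [W1_self]
  | succ n ih =>
      calc W1 (μ 0) (μ (n + 1)) ≤ W1 (μ 0) (μ n) + W1 (μ n) (μ (n + 1)) := W1_triangle _ _ _
        _ ≤ (∑ i ∈ Finset.range n, W1 (μ i) (μ (i + 1))) + W1 (μ n) (μ (n + 1)) :=
          add_le_add_left ih _
        _ = ∑ i ∈ Finset.range (n + 1), W1 (μ i) (μ (i + 1)) :=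
          (Finset.sum_range_succ _ _).symm

lemma min_liminf_le {α : Type*} {f : Filter α} (u v : α → EReal) :
    min (Filter.liminf u f) (Filter.liminf v f) ≤ Filter.liminf (fun t => min (u t) (v t)) f := by
  refine (le_liminf_iff (by isBoundedDefault) (by isBoundedDefault)).2 fun y hy => ?_
  have hu := eventually_lt_of_lt_liminf (lt_of_lt_of_le hy (min_le_left _ _)) (by isBoundedDefault)
  have hv := eventually_lt_of_lt_liminf (lt_of_lt_of_le hy (min_le_right _ _)) (by isBoundedDefault)
  filter_upwards [hu, hv] with t h1 h2
  exact lt_min h1 h2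

lemma finsetInf_liminf_le {α ι : Type*} (f : Filter α) (s : Finset ι) (g : ι → α → EReal) :
    (s.inf fun i => Filter.liminf (g i) f) ≤ Filter.liminf (fun t => s.inf fun i => g i t) f := by
  classical
  induction s using Finset.induction_on with
  | empty =>
      simp only [Finset.inf_empty]
      exact le_liminf_of_le (by isBoundedDefault) (Eventually.of_forall fun _ => le_top)
  | insert a s hnot ih =>
      simp only [Finset.inf_insert]
      calc (Filter.liminf (g a) f) ⊓ (s.inf fun i => Filter.liminf (g i) f)
          ≤ (Filter.liminf (g a) f) ⊓ Filter.liminf (fun t => s.inf fun i => g i t) f :=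
            inf_le_inf_left _ ih
        _ ≤ Filter.liminf (fun t => (g a t) ⊓ (s.inf fun i => g i t)) f := min_liminf_le _ _

lemma ediv_le_coe_of_le {a D : ℝ≥0∞} (hD0 : D ≠ 0) (hDt : D ≠ ⊤) {s : ℝ} (hs : 0 ≤ s)
    (h : a ≤ ENNReal.ofReal s * D) : (a : EReal) / (D : EReal) ≤ (s : EReal) := by
  have hD0' : (0 : EReal) < (D : EReal) := EReal.coe_ennreal_pos.2 (pos_iff_ne_zero.2 hD0)
  have hDt' : (D : EReal) ≠ ⊤ := fun hc => hDt (EReal.coe_ennreal_eq_top_iff.1 hc)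
  rw [EReal.div_le_iff_le_mul hD0' hDt']
  calc (a : EReal) ≤ ((ENNReal.ofReal s * D : ℝ≥0∞) : EReal) :=
        EReal.coe_ennreal_le_coe_ennreal_iff.2 h
    _ = ((ENNReal.ofReal s : ℝ≥0∞) : EReal) * (D : EReal) := EReal.coe_ennreal_mul _ _
    _ = (s : EReal) * (D : EReal) := by rw [EReal.coe_ennreal_ofReal, max_eq_left hs]
    _ = (D : EReal) * (s : EReal) := EReal.mul_comm _ _

lemma le_ofReal_mul_of_coe_le {a D : ℝ≥0∞} (hD0 : D ≠ 0) (hDt : D ≠ ⊤) {m : ℝ}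
    (h : (m : EReal) ≤ 1 - (a : EReal) / (D : EReal)) :
    a ≤ ENNReal.ofReal (1 - m) * D := by
  have hD0' : (0 : EReal) < (D : EReal) := EReal.coe_ennreal_pos.2 (pos_iff_ne_zero.2 hD0)
  have hDt' : (D : EReal) ≠ ⊤ := fun hc => hDt (EReal.coe_ennreal_eq_top_iff.1 hc)
  set q : EReal := (a : EReal) / (D : EReal) with hq
  have hq0 : 0 ≤ q := EReal.div_nonneg (EReal.coe_ennreal_nonneg a) (EReal.coe_ennreal_nonneg D)
  have hqt : q ≠ ⊤ := by
    intro hc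
    rw [hc, EReal.sub_top] at h
    exact absurd h (by simp)
  have hqb : q ≠ ⊥ := fun hc => by simp [hc] at hq0
  have hqr : ((q.toReal : ℝ) : EReal) = q := EReal.coe_toReal hqt hqb
  set r : ℝ := q.toReal with hr
  have h' : (m : EReal) ≤ ((1 - r : ℝ) : EReal) := by
    rw [EReal.coe_sub, EReal.coe_one, hqr]; exact h
  have hmr : m ≤ 1 - r := EReal.coe_le_coe_iff.1 h'
  have hr0 : 0 ≤ r := by
    rw [← EReal.coe_le_coe_iff, hqr]; exact hq0
  have hq_le : q ≤ ((1 - m : ℝ) : EReal) := by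
    rw [← hqr]; exact EReal.coe_le_coe_iff.2 (by linarith)
  have h1m : 0 ≤ 1 - m := by linarith
  rw [hq, EReal.div_le_iff_le_mul hD0' hDt'] at hq_le
  have : (a : EReal) ≤ ((D * ENNReal.ofReal (1 - m) : ℝ≥0∞) : EReal) := by
    rw [EReal.coe_ennreal_mul, EReal.coe_ennreal_ofReal, max_eq_left h1m]
    exact hq_le
  rw [mul_comm]
  exact EReal.coe_ennreal_le_coe_ennreal_iff.1 this


open scoped Classical in
lemma curvRatio_chain_le (P : ℝ → Kernel E E) (hP : ∀ s, IsMarkovKernel (P s))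
    {x y : E} (hxy : x ≠ y) {n : ℕ} {c : ℕ → E}
    (hc0 : c 0 = x) (hcn : c n = y)
    (hsum : (∑ i ∈ Finset.range n, dist (c i) (c (i + 1))) = dist x y)
    {t : ℝ} (ht : 0 < t) :
    ((Finset.range n).filter fun i => c i ≠ c (i + 1)).inf
        (fun i => curvRatio P (c i) (c (i + 1)) t) ≤ curvRatio P x y t := by
  classical
  haveI := hP t
  haveI : ∀ z : E, IsProbabilityMeasure (P t z) := fun z => inferInstance
  set S : Finset ℕ := (Finset.range n).filter (fun i => c i ≠ c (i + 1)) with hS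
  have hd : 0 < dist x y := dist_pos.2 hxy
  have hSne : S.Nonempty := by
    by_contra h
    rw [Finset.not_nonempty_iff_eq_empty] at h
    have hz : ∀ i ∈ Finset.range n, dist (c i) (c (i + 1)) = 0 := by
      intro i hi
      by_contra hne
      have hmem : i ∈ S := Finset.mem_filter.2 ⟨hi, fun he => hne (by rw [he, dist_self])⟩
      rw [h] at hmem
      exact absurd hmem (Finset.notMem_empty i)
    rw [Finset.sum_congr rfl hz, Finset.sum_const, smul_zero] at hsum
    exact hd.ne hsum
  set F : ℕ → EReal := fun i =>
    1 - (W1 (P t (c i)) (P t (c (i + 1))) : EReal)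
      / ((ENNReal.ofReal (dist (c i) (c (i + 1)))) : EReal) with hF
  obtain ⟨i0, hi0S, hi0⟩ := S.exists_mem_eq_inf' hSne F
  have hinf_le : (S.inf fun i => curvRatio P (c i) (c (i + 1)) t)
      ≤ curvRatio P (c i0) (c (i0 + 1)) t := Finset.inf_le hi0S
  refine le_trans hinf_le ?_
  rw [curvRatio, curvRatio]
  refine EReal.div_le_div_right_of_nonneg (by exact_mod_cast ht.le) ?_
  -- main inequality without the division by t
  set q0 : EReal := (W1 (P t (c i0)) (P t (c (i0 + 1))) : EReal)
    / ((ENNReal.ofReal (dist (c i0) (c (i0 + 1)))) : EReal) with hq0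
  have hq0nn : 0 ≤ q0 :=
    EReal.div_nonneg (EReal.coe_ennreal_nonneg _) (EReal.coe_ennreal_nonneg _)
  by_cases hq0t : q0 = ⊤
  · rw [hq0t, EReal.sub_top]
    exact bot_le
  · have hq0b : q0 ≠ ⊥ := fun hc => by simp [hc] at hq0nn
    set r0 : ℝ := q0.toReal with hr0
    have hq0r : ((r0 : ℝ) : EReal) = q0 := EReal.coe_toReal hq0t hq0b
    have hr0nn : 0 ≤ r0 := by rw [← EReal.coe_le_coe_iff, hq0r]; exact hq0nn
    set m : ℝ := 1 - r0 with hm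
    have hFi0 : F i0 = (m : EReal) := by
      rw [hF]
      simp only
      rw [← hq0, ← hq0r, hm, EReal.coe_sub, EReal.coe_one]
    have h1m : 0 ≤ 1 - m := by rw [hm]; linarith
    -- every index i < n satisfies the W1 bound
    have hbound : ∀ i ∈ Finset.range n,
        W1 (P t (c i)) (P t (c (i + 1)))
          ≤ ENNReal.ofReal (1 - m) * ENNReal.ofReal (dist (c i) (c (i + 1))) := by
      intro i hi
      by_cases hci : c i = c (i + 1)
      · rw [hci, W1_self]
        exact zero_le'
      · have hiS : i ∈ S := Finset.mem_filter.2 ⟨hi, hci⟩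
        have hFle : (m : EReal) ≤ F i := by
          rw [← hFi0, ← hi0]
          exact Finset.inf'_le F hiS
        have hdi : 0 < dist (c i) (c (i + 1)) := dist_pos.2 hci
        exact le_ofReal_mul_of_coe_le (by simpa using (ENNReal.ofReal_pos.2 hdi).ne')
          ENNReal.ofReal_ne_top hFle
    -- sum over the chain
    have hsum' : W1 (P t x) (P t y) ≤ ENNReal.ofReal (1 - m) * ENNReal.ofReal (dist x y) := by
      have hchain := W1_chain (fun i => P t (c i)) n
      rw [hc0, hcn] at hchain
      refine le_trans hchain (le_trans (Finset.sum_le_sum hbound) ?_)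
      rw [← Finset.mul_sum, ← ENNReal.ofReal_sum_of_nonneg (fun i _ => dist_nonneg), hsum]
    have hq : (W1 (P t x) (P t y) : EReal) / ((ENNReal.ofReal (dist x y)) : EReal)
        ≤ ((1 - m : ℝ) : EReal) :=
      ediv_le_coe_of_le (by simpa using (ENNReal.ofReal_pos.2 hd).ne') ENNReal.ofReal_ne_top
        h1m hsum'
    calc (1 : EReal) - q0 = F i0 := rfl
      _ = (m : EReal) := hFi0
      _ = 1 - ((1 - m : ℝ) : EReal) := by
          rw [← EReal.coe_one, ← EReal.coe_sub]
          norm_num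
      _ ≤ 1 - (W1 (P t x) (P t y) : EReal) / ((ENNReal.ofReal (dist x y)) : EReal) :=
          EReal.sub_le_sub (le_refl _) hq

end Aux

/-- On an `ε`-geodesic Polish metric space, the infimum of the coarse Ricci
curvature over all pairs of distinct points equals the infimum over pairs of distinct points
at distance at most `ε`. -/
theorem iInf_kappa_eq_iInf_kappa_of_epsGeodesic
    {E : Type*} [MetricSpace E] [PolishSpace E] [MeasurableSpace E] [BorelSpace E]
    (P : ℝ → Kernel E E) (hP : IsMarkovSemigroup P)
    (ε : ℝ) (hε : 0 < ε) (hgeo : IsEpsGeodesic E ε) :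
    ⨅ (p : E × E) (_ : p.1 ≠ p.2), kappa P p.1 p.2
      = ⨅ (p : E × E) (_ : p.1 ≠ p.2 ∧ dist p.1 p.2 ≤ ε), kappa P p.1 p.2 := by
  classical
  refine le_antisymm (le_iInf₂ fun p hp => iInf₂_le p hp.1) (le_iInf₂ fun p hp => ?_)
  obtain ⟨x, y⟩ := p
  replace hp : x ≠ y := hp
  obtain ⟨n, c, hc0, hcn, hcε, hcsum⟩ := hgeo x y
  have hd : 0 < dist x y := dist_pos.2 hp
  set S : Finset ℕ := (Finset.range n).filter (fun i => c i ≠ c (i + 1)) with hS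
  have hstep1 : (⨅ (q : E × E) (_ : q.1 ≠ q.2 ∧ dist q.1 q.2 ≤ ε), kappa P q.1 q.2)
      ≤ S.inf fun i => kappa P (c i) (c (i + 1)) := by
    refine Finset.le_inf fun i hi => ?_
    obtain ⟨hir, hine⟩ := Finset.mem_filter.1 hi
    exact iInf₂_le (c i, c (i + 1)) ⟨hine, hcε i (Finset.mem_range.1 hir)⟩
  refine le_trans hstep1 ?_
  have h2 : (S.inf fun i => kappa P (c i) (c (i + 1)))
      ≤ Filter.liminf (fun t => S.inf fun i => curvRatio P (c i) (c (i + 1)) t) (𝓝[>] 0) :=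
    finsetInf_liminf_le _ S _
  refine le_trans h2 ?_
  refine liminf_le_liminf ?_ (by isBoundedDefault) (by isBoundedDefault)
  filter_upwards [self_mem_nhdsWithin] with t ht
  exact curvRatio_chain_le P hP.1 hp hc0 hcn hcsum ht
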